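/- For any tiling T of a convex n-gon, the Scott permutation σ = Scott(T) has no fixed points: σ(i) ≠ i for all vertices i. -/

import Mathlib

open scoped Classical

/-!  Combinatorial model of tilings of a convex `n`-gon.
The vertices of the polygon are `ZMod n`, listed clockwise as `0,1,...,n-1`.
A tile is recorded as the finset of its vertices. -/

/-- The next vertex of `Q` strictly clockwise after `a`. -/
noncomputable def cnext (n : ℕ) (Q : Finset (ZMod n)) (a : ZMod n) : ZMod n :=
  if h : ∃ k : ℕ, 0 < k ∧ k ≤ n ∧ a + (k : ZMod n) ∈ Q then
    a + ((Nat.find h : ℕ) : ZMod n)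
  else a

/-- The previous vertex of `Q` strictly anticlockwise before `a`. -/
noncomputable def cprev (n : ℕ) (Q : Finset (ZMod n)) (a : ZMod n) : ZMod n :=
  if h : ∃ k : ℕ, 0 < k ∧ k ≤ n ∧ a - (k : ZMod n) ∈ Q then
    a - ((Nat.find h : ℕ) : ZMod n)
  else a

/-- `(a,b)` is a (directed, clockwise) edge of the tile `Q`:
`b` is the next vertex of `Q` clockwise after `a`. -/
noncomputable def IsEdge (n : ℕ) (Q : Finset (ZMod n)) (a b : ZMod n) : Prop :=
  a ∈ Q ∧ b ∈ Q ∧ a ≠ b ∧ b = cnext n Q a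

/-- `x` lies strictly inside the clockwise arc from `a` to `b`. -/
def Between (n : ℕ) (a x b : ZMod n) : Prop :=
  0 < (x - a).val ∧ (x - a).val < (b - a).val

/-- The chords `{a,b}` and `{c,d}` of a convex `m`-gon cross in its interior. -/
def Crosses (m : ℕ) (a b c d : ZMod m) : Prop :=
  Between m a c b ∧ Between m b d a

/-- A tiling of the convex `n`-gon by pairwise non-crossing diagonals, recorded by
its set of tiles.  Every tile has at least 3 vertices, every boundary edge
`[i,i+1]` is an edge of exactly one tile, every diagonal (non-boundary edge of a
tile) is shared with exactly one other tile (traversed in the opposite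
direction), two distinct tiles meet in at most one edge, and edges of tiles do
not cross. -/
structure PolygonTiling (n : ℕ) where
  tiles : Finset (Finset (ZMod n))
  three_le : ∀ Q ∈ tiles, 3 ≤ Q.card
  boundary_edge : ∀ i : ZMod n, ∃! Q, Q ∈ tiles ∧ IsEdge n Q i (i + 1)
  diag_shared : ∀ Q ∈ tiles, ∀ a b : ZMod n, IsEdge n Q a b → b ≠ a + 1 →
    ∃! Q', Q' ∈ tiles ∧ Q' ≠ Q ∧ IsEdge n Q' b a
  inter_small : ∀ Q ∈ tiles, ∀ Q' ∈ tiles, Q ≠ Q' → (Q ∩ Q').card ≤ 2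
  noncross : ∀ Q ∈ tiles, ∀ Q' ∈ tiles, ∀ a b c d : ZMod n,
    IsEdge n Q a b → IsEdge n Q' c d → ¬ Crosses n a b c d

/-- The set of diagonals of a tiling, as unordered pairs of vertices. -/
def diagonalsSet (n : ℕ) (T : PolygonTiling n) : Set (Finset (ZMod n)) :=
  {e | ∃ Q ∈ T.tiles, ∃ a b : ZMod n, IsEdge n Q a b ∧ b ≠ a + 1 ∧ e = {a, b}}

/-- One step of Scott's strand construction.  A state `(Q, a)` means the strand is
entering tile `Q` through its directed edge `(a, cnext Q a)`.  Inside `Q` the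
strand uses the segment parallel to the edge `[cprev Q a, a]`, oriented from `a`
towards `p := cprev Q a`, leaving `Q` through the edge `(pp, p)` where
`pp := cprev Q p`.  If that edge is a boundary edge the strand terminates at the
vertex `p`; otherwise it continues into the unique other tile having this edge. -/
noncomputable def scottStep (n : ℕ) (T : PolygonTiling n) :
    Finset (ZMod n) × ZMod n → (Finset (ZMod n) × ZMod n) ⊕ ZMod n := fun s =>
  let Q := s.1
  let a := s.2
  let p := cprev n Q a
  let pp := cprev n Q p
  if p = pp + 1 then Sum.inr p
  else if h : ∃ Q', Q' ∈ T.tiles ∧ Q' ≠ Q ∧ IsEdge n Q' p pp then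
    Sum.inl (Classical.choose h, p)
  else Sum.inr p

/-- The tile in which the strand starting at vertex `x` begins: the unique tile
containing the boundary edge `(x, x+1)`. -/
noncomputable def startTile (n : ℕ) (T : PolygonTiling n) (x : ZMod n) :
    Finset (ZMod n) :=
  Classical.choose (T.boundary_edge x)

/-- The sequence of states of the strand starting at vertex `x`
(`none` after the strand has terminated). -/
noncomputable def strandSeq (n : ℕ) (T : PolygonTiling n) (x : ZMod n) :
    ℕ → Option (Finset (ZMod n) × ZMod n)
  | 0 => some (startTile n T x, x)
  | k + 1 =>
    match strandSeq n T x k with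
    | none => none
    | some s =>
      match scottStep n T s with
      | Sum.inl s' => some s'
      | Sum.inr _ => none

/-- The strand starting at `x` uses a strand segment of tile `Q`, entering `Q`
in state `s = (Q, a)`. -/
def StrandVisits (n : ℕ) (T : PolygonTiling n) (x : ZMod n)
    (s : Finset (ZMod n) × ZMod n) : Prop :=
  ∃ k : ℕ, strandSeq n T x k = some s

/-- Follow a strand for at most `fuel` steps, returning its final vertex. -/
noncomputable def scottRun (n : ℕ) (T : PolygonTiling n) :
    ℕ → Finset (ZMod n) × ZMod n → ZMod n
  | 0, s => s.2
  | k + 1, s =>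
    match scottStep n T s with
    | Sum.inr y => y
    | Sum.inl s' => scottRun n T k s'

/-- The Scott map of the tiling `T`: the strand starting at vertex `x` ends at
vertex `scott n T x`.  (A strand uses at most one segment per tile, so
`T.tiles.card` steps always suffice.) -/
noncomputable def scott (n : ℕ) (T : PolygonTiling n) (x : ZMod n) : ZMod n :=
  scottRun n T T.tiles.card (startTile n T x, x)

/-- A triangulation: all tiles are triangles. -/
def IsTriangulation (n : ℕ) (T : PolygonTiling n) : Prop :=
  ∀ Q ∈ T.tiles, Q.card = 3

/-- An ear of a tiling: a tile exactly one of whose edges is a diagonal. -/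
noncomputable def IsEar (n : ℕ) (T : PolygonTiling n) (Q : Finset (ZMod n)) : Prop :=
  Q ∈ T.tiles ∧ ∃! p : ZMod n × ZMod n, IsEdge n Q p.1 p.2 ∧ p.2 ≠ p.1 + 1

/-- A vertex is simple if it is not an endpoint of any diagonal. -/
def IsSimpleVertex (n : ℕ) (T : PolygonTiling n) (v : ZMod n) : Prop :=
  ∀ e ∈ diagonalsSet n T, v ∉ e

/-- The open dual graph of a tiling: one vertex per tile, two tiles adjacent iff
they share a diagonal. -/
noncomputable def dualGraph (n : ℕ) (T : PolygonTiling n) :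
    SimpleGraph {Q // Q ∈ T.tiles} where
  Adj Q Q' := Q ≠ Q' ∧ ∃ a b : ZMod n, b ≠ a + 1 ∧
    ((IsEdge n Q.1 a b ∧ IsEdge n Q'.1 b a) ∨ (IsEdge n Q.1 b a ∧ IsEdge n Q'.1 a b))
  symm := by
    constructor
    rintro Q Q' ⟨hne, a, b, hb, h⟩
    refine ⟨hne.symm, a, b, hb, ?_⟩
    rcases h with ⟨h1, h2⟩ | ⟨h1, h2⟩
    · exact Or.inr ⟨h2, h1⟩
    · exact Or.inl ⟨h2, h1⟩
  loopless := by constructor; rintro Q ⟨hne, -⟩; exact hne rfl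

/-- `T'` is obtained from `T` by a single flip: a quadrilateral `a,b,c,d`
(clockwise) tiled by the triangles `{a,b,c}, {a,c,d}` (diagonal `[a,c]`) is
retiled by the triangles `{a,b,d}, {b,c,d}` (diagonal `[b,d]`). -/
def FlipStep (n : ℕ) (T T' : PolygonTiling n) : Prop :=
  ∃ a b c d : ZMod n, Between n a b c ∧ Between n c d a ∧
    ({a, b, c} : Finset (ZMod n)) ∈ T.tiles ∧ ({a, c, d} : Finset (ZMod n)) ∈ T.tiles ∧
    T'.tiles = (T.tiles \ {({a, b, c} : Finset (ZMod n)), {a, c, d}}) ∪ {{a, b, d}, {b, c, d}}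

/-- Flip equivalence: the equivalence relation generated by flips. -/
def FlipEquiv (n : ℕ) (T T' : PolygonTiling n) : Prop :=
  Relation.EqvGen (FlipStep n) T T'

/-- The midpoint of the (clockwise) tile edge starting at vertex `a`, recorded as
a vertex of the refined `2n`-gon (vertex `v` of the polygon becomes `2v`). -/
def midpt (n : ℕ) (a : ZMod n) : ZMod (2 * n) := ((2 * a.val + 1 : ℕ) : ZMod (2 * n))

/-- The first vertex of the edge through which the strand segment entering tile `Q`
in state `(Q,a)` leaves `Q`. -/
noncomputable def segTarget (n : ℕ) (Q : Finset (ZMod n)) (a : ZMod n) : ZMod n :=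
  cprev n Q (cprev n Q a)

/-- The strand segments of tile `Q` entering in states `(Q,a)` and `(Q,c)` cross
inside `Q` (their chords, joining midpoints of edges of `Q`, interleave). -/
noncomputable def SegCross (n : ℕ) (Q : Finset (ZMod n)) (a c : ZMod n) : Prop :=
  Crosses (2 * n) (midpt n a) (midpt n (segTarget n Q a))
    (midpt n c) (midpt n (segTarget n Q c))

/-- The set of tiles inside which the strands starting at `x` and at `y` cross. -/
noncomputable def crossingTiles (n : ℕ) (T : PolygonTiling n) (x y : ZMod n) :
    Set (Finset (ZMod n)) :=
  {Q | Q ∈ T.tiles ∧ ∃ a c : ZMod n,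
    StrandVisits n T x (Q, a) ∧ StrandVisits n T y (Q, c) ∧ SegCross n Q a c}

/-- `v` lies on the closed clockwise arc from `i` to `j`. -/
def InArc (n : ℕ) (i j v : ZMod n) : Prop := (v - i).val ≤ (j - i).val

section ScottAux

variable {n : ℕ}

private lemma zv_pos [NeZero n] {a b : ZMod n} (h : a ≠ b) : 0 < (a - b).val :=
  Nat.pos_of_ne_zero fun hv => h (sub_eq_zero.mp ((ZMod.val_eq_zero _).mp hv))

private lemma zv_rev [NeZero n] {a b : ZMod n} (h : a ≠ b) :
    (b - a).val = n - (a - b).val := by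
  have he : b - a = -(a - b) := by ring
  rw [he, ZMod.neg_val, if_neg (sub_ne_zero_of_ne h)]

private lemma zv_inj [NeZero n] {a b c : ZMod n} (h : (a - c).val = (b - c).val) : a = b := by
  have := ZMod.val_injective n h
  exact sub_left_inj.mp this

private lemma cnext_ex [NeZero n] (Q : Finset (ZMod n)) {a : ZMod n} (ha : a ∈ Q) :
    ∃ k : ℕ, 0 < k ∧ k ≤ n ∧ a + (k : ZMod n) ∈ Q :=
  ⟨n, Nat.pos_of_ne_zero (NeZero.ne n), le_rfl, by simpa [ZMod.natCast_self] using ha⟩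

private lemma cnext_spec [NeZero n] {Q : Finset (ZMod n)} {a : ZMod n}
    (hcard : 1 < Q.card) (ha : a ∈ Q) :
    cnext n Q a ∈ Q ∧ cnext n Q a ≠ a ∧
      ∀ x ∈ Q, x ≠ a → (cnext n Q a - a).val ≤ (x - a).val := by
  obtain ⟨x0, hx0, hx0a⟩ := Finset.exists_mem_ne hcard a
  have hex := cnext_ex Q ha
  have key : ∀ x ∈ Q, x ≠ a → Nat.find hex ≤ (x - a).val := by
    intro x hx hxa
    refine Nat.find_le ⟨zv_pos hxa, le_of_lt (ZMod.val_lt _), ?_⟩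
    rw [ZMod.natCast_rightInverse (x - a)]
    simpa using hx
  have hklt : Nat.find hex < n := lt_of_le_of_lt (key x0 hx0 hx0a) (ZMod.val_lt _)
  obtain ⟨hk0, -, hkQ⟩ := Nat.find_spec hex
  have hval : ((Nat.find hex : ℕ) : ZMod n).val = Nat.find hex := ZMod.val_cast_of_lt hklt
  have hcn : cnext n Q a = a + ((Nat.find hex : ℕ) : ZMod n) := by
    rw [cnext, dif_pos hex]
  have hsub : cnext n Q a - a = ((Nat.find hex : ℕ) : ZMod n) := by rw [hcn]; ring
  refine ⟨by rw [hcn]; exact hkQ, ?_, ?_⟩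
  · intro h
    have h0 : ((Nat.find hex : ℕ) : ZMod n).val = 0 := by
      rw [← hsub, h, sub_self, ZMod.val_zero]
    rw [hval] at h0; omega
  · intro x hx hxa
    rw [hsub, hval]; exact key x hx hxa

private lemma cprev_spec [NeZero n] {Q : Finset (ZMod n)} {a : ZMod n}
    (hcard : 1 < Q.card) (ha : a ∈ Q) :
    cprev n Q a ∈ Q ∧ cprev n Q a ≠ a ∧
      ∀ x ∈ Q, x ≠ a → (a - cprev n Q a).val ≤ (a - x).val := by
  obtain ⟨x0, hx0, hx0a⟩ := Finset.exists_mem_ne hcard a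
  have hex : ∃ k : ℕ, 0 < k ∧ k ≤ n ∧ a - (k : ZMod n) ∈ Q :=
    ⟨n, Nat.pos_of_ne_zero (NeZero.ne n), le_rfl, by simpa [ZMod.natCast_self] using ha⟩
  have key : ∀ x ∈ Q, x ≠ a → Nat.find hex ≤ (a - x).val := by
    intro x hx hxa
    refine Nat.find_le ⟨zv_pos (Ne.symm hxa), le_of_lt (ZMod.val_lt _), ?_⟩
    rw [ZMod.natCast_rightInverse (a - x)]
    simpa using hx
  have hklt : Nat.find hex < n := lt_of_le_of_lt (key x0 hx0 hx0a) (ZMod.val_lt _)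
  obtain ⟨hk0, -, hkQ⟩ := Nat.find_spec hex
  have hval : ((Nat.find hex : ℕ) : ZMod n).val = Nat.find hex := ZMod.val_cast_of_lt hklt
  have hcn : cprev n Q a = a - ((Nat.find hex : ℕ) : ZMod n) := by
    rw [cprev, dif_pos hex]
  have hsub : a - cprev n Q a = ((Nat.find hex : ℕ) : ZMod n) := by rw [hcn]; ring
  refine ⟨by rw [hcn]; exact hkQ, ?_, ?_⟩
  · intro h
    have h0 : ((Nat.find hex : ℕ) : ZMod n).val = 0 := by
      rw [← hsub, h, sub_self, ZMod.val_zero]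
    rw [hval] at h0; omega
  · intro x hx hxa
    rw [hsub, hval]; exact key x hx hxa

/-- maximality form of `cprev`. -/
private lemma cprev_max [NeZero n] {Q : Finset (ZMod n)} {a : ZMod n}
    (hcard : 1 < Q.card) (ha : a ∈ Q) :
    ∀ x ∈ Q, x ≠ a → (x - a).val ≤ (cprev n Q a - a).val := by
  obtain ⟨hp, hpa, hmin⟩ := cprev_spec hcard ha
  intro x hx hxa
  have h1 := hmin x hx hxa
  rw [zv_rev hxa.symm, zv_rev (Ne.symm hpa)] at *
  have hx' : 0 < (a - x).val := zv_pos (Ne.symm hxa)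
  have hxlt : (a - x).val < n := ZMod.val_lt _
  omega

/-- `cnext Q (cprev Q a) = a`. -/
private lemma cnext_cprev [NeZero n] {Q : Finset (ZMod n)} {a : ZMod n}
    (hcard : 1 < Q.card) (ha : a ∈ Q) :
    cnext n Q (cprev n Q a) = a := by
  obtain ⟨hp, hpa, hmin⟩ := cprev_spec hcard ha
  obtain ⟨hb, hbp, hbmin⟩ := cnext_spec hcard hp
  by_contra hne
  set p := cprev n Q a
  set b := cnext n Q p
  have h1 : (b - p).val ≤ (a - p).val := hbmin a ha (Ne.symm hpa)
  have h2 : a - b = (a - p) - (b - p) := by ring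
  have h3 : (a - b).val = (a - p).val - (b - p).val := by
    rw [h2, ZMod.val_sub h1]
  have h4 : (a - p).val ≤ (a - b).val := hmin b hb hne
  have h5 : 0 < (b - p).val := zv_pos hbp
  omega

/-- no vertex of `Q` lies strictly between `a` and `cnext Q a`. -/
private lemma cnext_not_between [NeZero n] {Q : Finset (ZMod n)} {a : ZMod n}
    (hcard : 1 < Q.card) (ha : a ∈ Q) :
    ∀ x ∈ Q, ¬ Between n a x (cnext n Q a) := by
  intro x hx ⟨h1, h2⟩
  have hxa : x ≠ a := fun h => by simp [h] at h1
  exact absurd ((cnext_spec hcard ha).2.2 x hx hxa) (by omega)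

/-- a cyclic set whose two "next" pointers at `a` and `b` point at each other
has at most two elements. -/
private lemma card_le_two_aux [NeZero n] {Q : Finset (ZMod n)} {a b : ZMod n}
    (ha : a ∈ Q) (hb : b ∈ Q) (hab : a ≠ b)
    (h1 : ∀ x ∈ Q, x ≠ a → (b - a).val ≤ (x - a).val)
    (h2 : ∀ x ∈ Q, x ≠ b → (a - b).val ≤ (x - b).val) : Q.card ≤ 2 := by
  have hsub : Q ⊆ {a, b} := by
    intro x hx
    simp only [Finset.mem_insert, Finset.mem_singleton]
    by_contra hxab
    push_neg at hxab
    obtain ⟨hxa, hxb⟩ := hxab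
    have e1 : (b - a).val ≤ (x - a).val := h1 x hx hxa
    have e1' : (b - a).val ≠ (x - a).val := fun h => hxb (zv_inj h.symm)
    have e2 : (x - b).val = (x - a).val - (b - a).val := by
      rw [show x - b = (x - a) - (b - a) by ring, ZMod.val_sub e1]
    have e3 : (a - b).val ≤ (x - b).val := h2 x hx hxb
    have e4 : (a - b).val = n - (b - a).val := zv_rev hab.symm
    have e5 : (x - a).val < n := ZMod.val_lt _
    have e6 : 0 < (b - a).val := zv_pos (Ne.symm hab)
    omega
  calc Q.card ≤ ({a, b} : Finset (ZMod n)).card := Finset.card_le_card hsub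
    _ ≤ 2 := Finset.card_insert_le _ _ |>.trans (by simp)

/-- The invariant along a strand aimed away from `i`. -/
def ScInv (n : ℕ) (T : PolygonTiling n) (i : ZMod n)
    (s : Finset (ZMod n) × ZMod n) : Prop :=
  s.1 ∈ T.tiles ∧ s.2 ∈ s.1 ∧ Between n s.2 i (cnext n s.1 s.2)

private lemma core [NeZero n] {Q : Finset (ZMod n)} (hcard3 : 3 ≤ Q.card)
    {a i : ZMod n} (ha : a ∈ Q) (hbet : Between n a i (cnext n Q a)) :
    cprev n Q a ≠ i ∧ Between n (cprev n Q a) i (cprev n Q (cprev n Q a)) := by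
  have hcard : 1 < Q.card := by omega
  have Hb := cnext_spec hcard ha
  have Hp := cprev_spec hcard ha
  have Hpp := cprev_spec hcard Hp.1
  have hcna : cnext n Q (cprev n Q a) = a := cnext_cprev hcard ha
  have Ha' := (cnext_spec hcard Hp.1).2.2
  rw [hcna] at Ha'
  have Hmax := cprev_max hcard Hp.1
  set p := cprev n Q a with hpdef
  set pp := cprev n Q p with hppdef
  set b := cnext n Q a with hbdef
  obtain ⟨hbQ, hba, hbmin⟩ := Hb
  obtain ⟨hpQ, hpa, -⟩ := Hp
  obtain ⟨hppQ, hppp, -⟩ := Hpp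
  obtain ⟨hi1, hi2⟩ := hbet
  have hia : i ≠ a := fun h => by simp [h] at hi1
  have hpi : p ≠ i := by
    intro h
    have := hbmin i (h ▸ hpQ) hia
    omega
  refine ⟨hpi, ?_⟩
  have hbp : b ≠ p := by
    intro h
    have hc := card_le_two_aux ha hpQ (Ne.symm hpa) (by rw [← h]; exact hbmin) Ha'
    omega
  have hfa : 0 < (a - p).val := zv_pos (Ne.symm hpa)
  have hfalt : (a - p).val < n := ZMod.val_lt _
  have hvba : (b - a).val < n := ZMod.val_lt _
  have hfab : (a - p).val ≤ (b - p).val := Ha' b hbQ hbp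
  have hfb : (b - p).val = (a - p).val + (b - a).val := by
    have heq : b - p = (a - p) + (b - a) := by ring
    rcases Nat.lt_or_ge ((a - p).val + (b - a).val) n with h | h
    · rw [heq, ZMod.val_add, Nat.mod_eq_of_lt h]
    · exfalso
      have hlt2 : (a - p).val + (b - a).val - n < n := by omega
      have hmod : ((a - p).val + (b - a).val) % n = (a - p).val + (b - a).val - n := by
        rw [Nat.mod_eq_sub_mod h, Nat.mod_eq_of_lt hlt2]
      rw [heq, ZMod.val_add, hmod] at hfab
      omega
  have hfblt : (b - p).val < n := ZMod.val_lt _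
  have hfi : (i - p).val = (a - p).val + (i - a).val := by
    have hlt : (a - p).val + (i - a).val < n := by omega
    rw [show i - p = (a - p) + (i - a) by ring, ZMod.val_add_of_lt hlt]
  have hfbpp : (b - p).val ≤ (pp - p).val := Hmax b hbQ hbp
  exact ⟨by omega, by omega⟩

private lemma core0 [NeZero n] {Q : Finset (ZMod n)} (hcard3 : 3 ≤ Q.card)
    {a : ZMod n} (ha : a ∈ Q) :
    cprev n Q a ≠ a ∧ Between n (cprev n Q a) a (cprev n Q (cprev n Q a)) := by
  have hcard : 1 < Q.card := by omega
  have Hp := cprev_spec hcard ha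
  have Hpp := cprev_spec hcard Hp.1
  have hcna : cnext n Q (cprev n Q a) = a := cnext_cprev hcard ha
  have Ha' := (cnext_spec hcard Hp.1).2.2
  rw [hcna] at Ha'
  have hcnpp : cnext n Q (cprev n Q (cprev n Q a)) = cprev n Q a := cnext_cprev hcard Hp.1
  have Hb := (cnext_spec hcard ha).2.2
  set p := cprev n Q a with hpdef
  set pp := cprev n Q p with hppdef
  obtain ⟨hpQ, hpa, -⟩ := Hp
  obtain ⟨hppQ, hppp, -⟩ := Hpp
  refine ⟨hpa, ?_⟩
  have h1 : 0 < (a - p).val := zv_pos (Ne.symm hpa)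
  have h2 : (a - p).val ≤ (pp - p).val := Ha' pp hppQ hppp
  have h3 : a ≠ pp := by
    intro h
    have hcnap : cnext n Q a = p := by rw [h]; exact hcnpp
    have hc := card_le_two_aux ha hpQ (Ne.symm hpa) (by rw [← hcnap]; exact Hb) Ha'
    omega
  have h4 : (a - p).val ≠ (pp - p).val := fun h => h3 (zv_inj h)
  exact ⟨h1, by omega⟩

private lemma step_cases (n : ℕ) (T : PolygonTiling n) (s : Finset (ZMod n) × ZMod n) :
    scottStep n T s = Sum.inr (cprev n s.1 s.2) ∨
    ∃ Q', scottStep n T s = Sum.inl (Q', cprev n s.1 s.2) ∧ Q' ∈ T.tiles ∧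
      IsEdge n Q' (cprev n s.1 s.2) (cprev n s.1 (cprev n s.1 s.2)) := by
  by_cases h1 : cprev n s.1 s.2 = cprev n s.1 (cprev n s.1 s.2) + 1
  · left; simp only [scottStep, if_pos h1]
  · by_cases h2 : ∃ Q', Q' ∈ T.tiles ∧ Q' ≠ s.1 ∧
        IsEdge n Q' (cprev n s.1 s.2) (cprev n s.1 (cprev n s.1 s.2))
    · right
      obtain ⟨hm, -, hE⟩ := Classical.choose_spec h2
      exact ⟨Classical.choose h2, by simp only [scottStep, if_neg h1, dif_pos h2], hm, hE⟩
    · left; simp only [scottStep, if_neg h1, dif_neg h2]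

private lemma run_ne (n : ℕ) (hn : 3 ≤ n) (T : PolygonTiling n) (i : ZMod n) :
    ∀ (k : ℕ) (s : Finset (ZMod n) × ZMod n), ScInv n T i s →
      scottRun n T k s ≠ i := by
  haveI : NeZero n := ⟨by omega⟩
  intro k
  induction k with
  | zero =>
    intro s hs
    have h0 : 0 < (i - s.2).val := hs.2.2.1
    show s.2 ≠ i
    intro h
    rw [h, sub_self, ZMod.val_zero] at h0
    exact Nat.lt_irrefl 0 h0
  | succ k ih =>
    intro s hs
    have hcore := core (T.three_le s.1 hs.1) hs.2.1 hs.2.2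
    rcases step_cases n T s with h | ⟨Q', h, hm, hE⟩
    · simp only [scottRun, h]
      exact hcore.1
    · simp only [scottRun, h]
      refine ih _ ⟨hm, hE.1, ?_⟩
      rw [← hE.2.2.2]
      exact hcore.2


theorem stmt8 (n : ℕ) (hn : 3 ≤ n) (T : PolygonTiling n) (i : ZMod n) :
    scott n T i ≠ i := by
  haveI : NeZero n := ⟨by omega⟩
  have hQspec : startTile n T i ∈ T.tiles ∧ IsEdge n (startTile n T i) i (i + 1) :=
    (Classical.choose_spec (T.boundary_edge i)).1
  have hcore := core0 (T.three_le _ hQspec.1) hQspec.2.1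
  have hN : T.tiles.card ≠ 0 := Finset.card_ne_zero_of_mem hQspec.1
  obtain ⟨m, hm⟩ : ∃ m, T.tiles.card = m + 1 := ⟨T.tiles.card - 1, by omega⟩
  unfold scott
  rw [hm]
  rcases step_cases n T (startTile n T i, i) with h | ⟨Q', h, hmem, hE⟩
  · simp only [scottRun, h]
    exact hcore.1
  · simp only [scottRun, h]
    refine run_ne n hn T i m _ ⟨hmem, hE.1, ?_⟩
    rw [← hE.2.2.2]
    exact hcore.2
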